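/- Let H = (V_H, E_H) be an undirected multigraph with edge connectivity λ_H = λ(H), let N_h ⊆ E_H be a subset of its edges, let F_1, …, F_m be a maximal spanning forest decomposition (msfd) of order m ≥ λ_H + 1 of H ∖ N_h, and let H' = (V_H, E') be the graph with E' = N_h ∪ F_1 ∪ … ∪ F_{λ_H+1}. Then λ(H') = λ(H), and a cut (S, V_H∖S) is a minimum cut of H' if and only if it is a minimum cut of H. -/

import Mathlib

open scoped Classical in
/-- A multigraph on vertex set `V` is modeled by the multiset of its edges,
each an unordered pair of distinct vertices. `mCut M S` is the size of the edge cut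
`E_M(S, V∖S)`: the number of edges of `M` (with multiplicity) with one endpoint in `S`
and the other in `Sᶜ`. -/
noncomputable def mCut {V : Type*} (M : Multiset (Sym2 V)) (S : Set V) : ℕ :=
  Multiset.card (M.filter fun e => ∃ u ∈ S, ∃ v ∈ Sᶜ, e = s(u, v))

/-- The simple graph underlying a multiset of edges. -/
def graphOf {V : Type*} (M : Multiset (Sym2 V)) : SimpleGraph V :=
  SimpleGraph.fromEdgeSet {e | e ∈ M}

/-- A multiset of edges is a forest: no repeated edges, no self-loops, and the
underlying simple graph is acyclic. -/
def IsMForest {V : Type*} (F : Multiset (Sym2 V)) : Prop :=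
  F.Nodup ∧ (∀ e ∈ F, ¬e.IsDiag) ∧ (graphOf F).IsAcyclic

/-- `F` is a maximal spanning forest of the multigraph `R`: a subforest of `R` such that
the endpoints of every edge of `R` lie in the same component of `F`. -/
def IsMaxSpanningForest {V : Type*} (R F : Multiset (Sym2 V)) : Prop :=
  F ≤ R ∧ IsMForest F ∧ ∀ u v : V, s(u, v) ∈ R → (graphOf F).Reachable u v

open scoped Classical in
/-- `F 1, …, F m` is a maximal spanning forest decomposition of order `m` of the
multigraph `M`: the forests decompose `M` (so they are edge-disjoint as sub-multisets
and their union is `M`) and each `F i` is a maximal spanning forest of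
`M ∖ (F 1 ∪ … ∪ F (i-1))`. -/
noncomputable def IsMSFD {V : Type*} (M : Multiset (Sym2 V)) (m : ℕ)
    (F : ℕ → Multiset (Sym2 V)) : Prop :=
  (∑ i ∈ Finset.Icc 1 m, F i) = M ∧
  ∀ i ∈ Finset.Icc 1 m, IsMaxSpanningForest (M - ∑ j ∈ Finset.Icc 1 (i - 1), F j) (F i)

/-- The edge connectivity of the multigraph `M`: the minimum of `λ(S,M)` over all
nonempty proper subsets `S ⊂ V`. -/
noncomputable def mEdgeConn {V : Type*} (M : Multiset (Sym2 V)) : ℕ :=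
  sInf {c : ℕ | ∃ S : Set V, S.Nonempty ∧ Sᶜ.Nonempty ∧ mCut M S = c}

section Aux

open scoped Classical

variable {V : Type*}

lemma mCut_add (A B : Multiset (Sym2 V)) (S : Set V) :
    mCut (A + B) S = mCut A S + mCut B S := by
  simp [mCut, Multiset.filter_add]

lemma mCut_mono {A B : Multiset (Sym2 V)} (h : A ≤ B) (S : Set V) :
    mCut A S ≤ mCut B S :=
  Multiset.card_le_card (Multiset.filter_le_filter _ h)

lemma mCut_sum {ι : Type*} (t : Finset ι) (F : ι → Multiset (Sym2 V)) (S : Set V) :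
    mCut (∑ i ∈ t, F i) S = ∑ i ∈ t, mCut (F i) S := by
  induction t using Finset.induction with
  | empty => simp [mCut]
  | insert _ _ h ih =>
    rw [Finset.sum_insert h, Finset.sum_insert h, mCut_add, ih]

lemma mCut_pos {M : Multiset (Sym2 V)} {S : Set V} {u v : V}
    (h : s(u, v) ∈ M) (hu : u ∈ S) (hv : v ∈ Sᶜ) : 1 ≤ mCut M S := by
  have : s(u, v) ∈ M.filter fun e => ∃ u ∈ S, ∃ v ∈ Sᶜ, e = s(u, v) :=
    Multiset.mem_filter.mpr ⟨h, u, hu, v, hv, rfl⟩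
  exact Multiset.card_pos_iff_exists_mem.mpr ⟨_, this⟩

lemma exists_crossing {F : Multiset (Sym2 V)} {S : Set V} {u v : V}
    (h : (graphOf F).Reachable u v) (hu : u ∈ S) (hv : v ∈ Sᶜ) :
    ∃ a ∈ S, ∃ b ∈ Sᶜ, s(a, b) ∈ F := by
  obtain ⟨p⟩ := h
  obtain ⟨d, _, hdS, hdnS⟩ := p.exists_boundary_dart S hu hv
  have hadj : (SimpleGraph.fromEdgeSet {e | e ∈ F}).Adj d.fst d.snd := d.adj
  rw [SimpleGraph.fromEdgeSet_adj] at hadj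
  exact ⟨d.fst, hdS, d.snd, hdnS, hadj.1⟩

/-- Key lemma: the union of the first `k` forests of an msfd of `M` preserves every
cut up to value `k`. -/
lemma msfd_cut_lower (M : Multiset (Sym2 V)) (m k : ℕ) (hk : k ≤ m)
    (F : ℕ → Multiset (Sym2 V)) (hF : IsMSFD M m F) (S : Set V) :
    min (mCut M S) k ≤ mCut (∑ i ∈ Finset.Icc 1 k, F i) S := by
  by_cases h : ∀ i ∈ Finset.Icc 1 k, 1 ≤ mCut (F i) S
  · calc min (mCut M S) k ≤ k := min_le_right _ _
      _ = ∑ _i ∈ Finset.Icc 1 k, 1 := by simp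
      _ ≤ ∑ i ∈ Finset.Icc 1 k, mCut (F i) S := Finset.sum_le_sum h
      _ = mCut (∑ i ∈ Finset.Icc 1 k, F i) S := (mCut_sum _ _ _).symm
  · push_neg at h
    obtain ⟨i, hi, hzero⟩ := h
    have hz : mCut (F i) S = 0 := Nat.lt_one_iff.mp hzero
    obtain ⟨hi1, hik⟩ := Finset.mem_Icc.mp hi
    have hmax := hF.2 i (Finset.mem_Icc.mpr ⟨hi1, hik.trans hk⟩)
    have hRzero : mCut (M - ∑ j ∈ Finset.Icc 1 (i - 1), F j) S = 0 := by
      rw [mCut, Multiset.card_eq_zero, Multiset.filter_eq_nil]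
      rintro e he ⟨u, hu, v, hv, rfl⟩
      obtain ⟨a, ha, b, hb, hab⟩ := exists_crossing (hmax.2.2 u v he) hu hv
      have := mCut_pos hab ha hb
      omega
    have hple : ∑ j ∈ Finset.Icc 1 (i - 1), F j ≤ M := by
      rw [← hF.1]
      exact Finset.sum_le_sum_of_subset
        (Finset.Icc_subset_Icc_right (by omega))
    have hMeq : mCut M S = mCut (∑ j ∈ Finset.Icc 1 (i - 1), F j) S := by
      conv_lhs => rw [← add_tsub_cancel_of_le hple]
      rw [mCut_add, hRzero, add_zero]
    calc min (mCut M S) k ≤ mCut M S := min_le_left _ _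
      _ = mCut (∑ j ∈ Finset.Icc 1 (i - 1), F j) S := hMeq
      _ ≤ mCut (∑ i ∈ Finset.Icc 1 k, F i) S :=
        mCut_mono (Finset.sum_le_sum_of_subset
          (Finset.Icc_subset_Icc_right (by omega))) S

end Aux

open scoped Classical in
/-- Let `H` be a multigraph with edge connectivity `λ_H`, let `N ⊆ E_H`, let
`F 1, …, F m` be an msfd of order `m ≥ λ_H + 1` of `H ∖ N`, and let
`H' = N ∪ F 1 ∪ … ∪ F (λ_H + 1)`. Then `λ(H') = λ(H)` and a cut `(S, V∖S)` is a
minimum cut of `H'` iff it is a minimum cut of `H`. -/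
theorem msfd_min_cut_iff {V : Type*} [Fintype V] (H : Multiset (Sym2 V))
    (hH : ∀ e ∈ H, ¬e.IsDiag) (N : Multiset (Sym2 V)) (hN : N ≤ H)
    (m : ℕ) (hm : mEdgeConn H + 1 ≤ m) (F : ℕ → Multiset (Sym2 V))
    (hF : IsMSFD (H - N) m F) :
    mEdgeConn (N + ∑ i ∈ Finset.Icc 1 (mEdgeConn H + 1), F i) = mEdgeConn H ∧
    ∀ S : Set V, S.Nonempty → Sᶜ.Nonempty →
      (mCut (N + ∑ i ∈ Finset.Icc 1 (mEdgeConn H + 1), F i) S =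
        mEdgeConn (N + ∑ i ∈ Finset.Icc 1 (mEdgeConn H + 1), F i) ↔
       mCut H S = mEdgeConn H) := by
  set l := mEdgeConn H with hl
  set M' := N + ∑ i ∈ Finset.Icc 1 (l + 1), F i with hM'
  have hk : l + 1 ≤ m := hm
  have hpartial : ∑ i ∈ Finset.Icc 1 (l + 1), F i ≤ H - N := by
    rw [← hF.1]
    exact Finset.sum_le_sum_of_subset (Finset.Icc_subset_Icc_right hk)
  have hM'le : M' ≤ H := by
    calc M' ≤ N + (H - N) := add_le_add (le_refl N) hpartial
      _ = H := add_tsub_cancel_of_le hN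
  have hsplit : ∀ S : Set V, mCut H S = mCut N S + mCut (H - N) S := by
    intro S
    conv_lhs => rw [← add_tsub_cancel_of_le hN]
    exact mCut_add _ _ _
  have hlow : ∀ S : Set V, min (mCut H S) (l + 1) ≤ mCut M' S := by
    intro S
    have h1 := msfd_cut_lower (H - N) m (l + 1) hk F hF S
    have h2 : mCut M' S = mCut N S + mCut (∑ i ∈ Finset.Icc 1 (l + 1), F i) S :=
      mCut_add _ _ _
    have h3 := hsplit S
    omega
  by_cases hne : ∃ S : Set V, S.Nonempty ∧ Sᶜ.Nonempty
  · obtain ⟨S₁, hS₁, hS₁c⟩ := hne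
    have hTne : {c : ℕ | ∃ S : Set V, S.Nonempty ∧ Sᶜ.Nonempty ∧ mCut H S = c}.Nonempty :=
      ⟨mCut H S₁, S₁, hS₁, hS₁c, rfl⟩
    have hmem : l ∈ {c : ℕ | ∃ S : Set V, S.Nonempty ∧ Sᶜ.Nonempty ∧ mCut H S = c} :=
      Nat.sInf_mem hTne
    obtain ⟨S₀, hS₀, hS₀c, hS₀cut⟩ := hmem
    have hlb : ∀ S : Set V, S.Nonempty → Sᶜ.Nonempty → l ≤ mCut H S := by
      intro S hS hSc
      exact Nat.sInf_le ⟨S, hS, hSc, rfl⟩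
    have hlb' : ∀ S : Set V, S.Nonempty → Sᶜ.Nonempty → l ≤ mCut M' S := by
      intro S hS hSc
      have := hlow S
      have := hlb S hS hSc
      omega
    have hS₀' : mCut M' S₀ = l := by
      have h1 := mCut_mono hM'le S₀
      have h2 := hlb' S₀ hS₀ hS₀c
      omega
    have hconn : mEdgeConn M' = l := by
      refine le_antisymm (Nat.sInf_le ⟨S₀, hS₀, hS₀c, hS₀'⟩) (le_csInf ⟨mCut M' S₀, S₀, hS₀, hS₀c, rfl⟩ ?_)
      rintro c ⟨S, hS, hSc, rfl⟩
      exact hlb' S hS hSc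
    refine ⟨hconn, fun S hS hSc => ?_⟩
    rw [hconn]
    constructor
    · intro h
      have h1 := hlow S
      have h2 := hlb S hS hSc
      have h3 := mCut_mono hM'le S
      omega
    · intro h
      have h1 := mCut_mono hM'le S
      have h2 := hlb' S hS hSc
      omega
  · push_neg at hne
    have hempty : ∀ M : Multiset (Sym2 V), mEdgeConn M = 0 := by
      intro M
      rw [mEdgeConn]
      convert Nat.sInf_empty
      rw [Set.eq_empty_iff_forall_notMem]
      rintro c ⟨S, hS, hSc, -⟩
      rw [hne S hS] at hSc
      exact absurd hSc (by simp)
    refine ⟨by rw [hempty, hl, hempty], fun S hS hSc => absurd (hne S hS) (Set.nonempty_iff_ne_empty.mp hSc)⟩
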